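/- arXiv:math/0002068 — 4 statements merged into one kernel-verified Lean document; each statement's English description precedes it below -/
import Mathlib

section
/- For all real μ, the absolute value of the integral from 0 to μ of e^{-2iζ²} dζ is at most √3. -/
open Complex intervalIntegral Set

noncomputable def fre (ζ : ℝ) : ℂ := Complex.exp (-2 * Complex.I * (ζ:ℂ)^2)

lemma fre_cont : Continuous fre := by
  unfold fre; fun_prop

lemma fre_norm (ζ : ℝ) : ‖fre ζ‖ = 1 := by
  unfold fre
  rw [Complex.norm_exp]
  have h : (-2 * Complex.I * (ζ:ℂ)^2).re = 0 := by
    simp [pow_two, Complex.mul_re, Complex.mul_im]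
  rw [h, Real.exp_zero]

lemma fre_hasDeriv (x : ℝ) :
    HasDerivAt fre (Complex.exp (-2 * Complex.I * (x:ℂ)^2) * (-4 * Complex.I * x)) x := by
  have h1 : HasDerivAt (fun y : ℝ => (y:ℂ)) 1 x := (hasDerivAt_id x).ofReal_comp
  have h2 : HasDerivAt (fun y : ℝ => -2 * Complex.I * (y:ℂ)^2) (-4 * Complex.I * x) x := by
    have := (h1.mul h1).const_mul (-2 * Complex.I)
    have hfun : (fun y:ℝ => -2*Complex.I*((y:ℂ)*(y:ℂ))) = (fun y:ℝ => -2*Complex.I*(y:ℂ)^2) := by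
      funext y; ring
    simp only [Pi.mul_apply] at this
    rw [hfun] at this
    refine this.congr_deriv ?_
    ring
  exact h2.cexp

lemma key (μ : ℝ) (hμ1 : 1 < μ) :
    ‖∫ ζ in (1:ℝ)..μ, fre ζ‖ ≤ 1/2 := by
  set u : ℝ → ℂ := fun x => Complex.I/4 * ((x⁻¹ : ℝ) : ℂ) with hu_def
  set u' : ℝ → ℂ := fun x => Complex.I/4 * ((-(x^2)⁻¹ : ℝ) : ℂ) with hu'_def
  set v' : ℝ → ℂ := fun x => Complex.exp (-2 * Complex.I * (x:ℂ)^2) * (-4 * Complex.I * x) with hv'_def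
  have hmem : ∀ x ∈ Set.uIcc (1:ℝ) μ, 1 ≤ x := by
    intro x hx
    rw [Set.uIcc_of_le hμ1.le] at hx
    exact hx.1
  have hu : ∀ x ∈ Set.uIcc (1:ℝ) μ, HasDerivAt u (u' x) x := by
    intro x hx
    have hx1 := hmem x hx
    have hne : x ≠ 0 := by linarith
    exact ((hasDerivAt_inv hne).ofReal_comp).const_mul (Complex.I/4)
  have hv : ∀ x ∈ Set.uIcc (1:ℝ) μ, HasDerivAt fre (v' x) x := fun x _ => fre_hasDeriv x
  have hu'int : IntervalIntegrable u' MeasureTheory.volume 1 μ := by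
    apply ContinuousOn.intervalIntegrable
    apply continuousOn_const.mul
    apply Complex.continuous_ofReal.comp_continuousOn
    apply ContinuousOn.neg
    apply ContinuousOn.inv₀ (by fun_prop)
    intro x hx
    have := hmem x hx
    positivity
  have hv'int : IntervalIntegrable v' MeasureTheory.volume 1 μ := by
    apply Continuous.intervalIntegrable
    fun_prop
  have hparts := intervalIntegral.integral_mul_deriv_eq_deriv_mul hu hv hu'int hv'int
  have heq : ∫ x in (1:ℝ)..μ, fre x = ∫ x in (1:ℝ)..μ, u x * v' x := by
    apply intervalIntegral.integral_congr
    intro x hx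
    have hx1 := hmem x hx
    have hne : (x:ℂ) ≠ 0 := by exact_mod_cast ne_of_gt (by linarith : (0:ℝ) < x)
    simp only [hu_def, hv'_def, fre]
    push_cast
    field_simp
    ring_nf
    simp [Complex.I_sq]
  -- norm computations
  have hnu : ∀ x : ℝ, 1 ≤ x → ‖u x * fre x‖ = (4*x)⁻¹ := by
    intro x hx
    have hx0 : (0:ℝ) < x := by linarith
    rw [norm_mul, fre_norm, mul_one, hu_def]
    simp only [norm_mul, norm_div, Complex.norm_I, Complex.norm_real, Real.norm_eq_abs]
    rw [_root_.abs_of_nonneg (by positivity : (0:ℝ) ≤ x⁻¹)]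
    rw [show ‖(4:ℂ)‖ = 4 from by norm_num]
    rw [mul_inv]
    ring
  have hnu' : ∀ x : ℝ, 1 ≤ x → ‖u' x * fre x‖ = (4*x^2)⁻¹ := by
    intro x hx
    have hx0 : (0:ℝ) < x := by linarith
    rw [norm_mul, fre_norm, mul_one, hu'_def]
    simp only [norm_mul, norm_div, Complex.norm_I, Complex.norm_real, Real.norm_eq_abs, abs_neg]
    rw [_root_.abs_of_nonneg (by positivity : (0:ℝ) ≤ (x^2)⁻¹)]
    rw [show ‖(4:ℂ)‖ = 4 from by norm_num]
    rw [mul_inv]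
    ring
  -- integral of the remainder norm
  have htail : ∫ x in (1:ℝ)..μ, ‖u' x * fre x‖ = 1/4 - (4*μ)⁻¹ := by
    have hF : ∀ x ∈ Set.uIcc (1:ℝ) μ, HasDerivAt (fun y : ℝ => -(4*y)⁻¹) ((4*x^2)⁻¹) x := by
      intro x hx
      have hx1 := hmem x hx
      have hne : (4:ℝ)*x ≠ 0 := by positivity
      have := (((hasDerivAt_id x).const_mul (4:ℝ)).inv hne).neg
      simp only [Pi.neg_def, Pi.inv_def, id] at this
      refine this.congr_deriv ?_
      field_simp
    have hint : IntervalIntegrable (fun x : ℝ => (4*x^2)⁻¹) MeasureTheory.volume 1 μ := by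
      apply ContinuousOn.intervalIntegrable
      apply ContinuousOn.inv₀ (by fun_prop)
      intro x hx
      have := hmem x hx
      positivity
    have := intervalIntegral.integral_eq_sub_of_hasDerivAt hF hint
    rw [intervalIntegral.integral_congr (g := fun x : ℝ => (4*x^2)⁻¹)
      (fun x hx => hnu' x (hmem x hx)), this]
    norm_num
    ring
  calc ‖∫ ζ in (1:ℝ)..μ, fre ζ‖
      = ‖u μ * fre μ - u 1 * fre 1 - ∫ x in (1:ℝ)..μ, u' x * fre x‖ := by rw [heq, hparts]
    _ ≤ ‖u μ * fre μ‖ + ‖u 1 * fre 1‖ + ‖∫ x in (1:ℝ)..μ, u' x * fre x‖ := by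
        exact le_trans (norm_sub_le _ _) (by gcongr; exact norm_sub_le _ _)
    _ ≤ (4*μ)⁻¹ + 1/4 + (1/4 - (4*μ)⁻¹) := by
        rw [hnu μ hμ1.le, hnu 1 le_rfl]
        gcongr
        · norm_num
        · calc ‖∫ x in (1:ℝ)..μ, u' x * fre x‖ ≤ ∫ x in (1:ℝ)..μ, ‖u' x * fre x‖ :=
              intervalIntegral.norm_integral_le_integral_norm hμ1.le
          _ = 1/4 - (4*μ)⁻¹ := htail
    _ = 1/2 := by ring

lemma fre_even (x : ℝ) : fre (-x) = fre x := by
  unfold fre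
  push_cast
  ring_nf

lemma main_nonneg (μ : ℝ) (hμ : 0 ≤ μ) : ‖∫ ζ in (0:ℝ)..μ, fre ζ‖ ≤ 3/2 := by
  by_cases h1 : μ ≤ 1
  · have := intervalIntegral.norm_integral_le_of_norm_le_const
      (C := 1) (f := fre) (a := (0:ℝ)) (b := μ) (fun x _ => (fre_norm x).le)
    rw [_root_.abs_of_nonneg (by linarith : (0:ℝ) ≤ μ - 0)] at this
    linarith
  · push_neg at h1
    have hsplit := intervalIntegral.integral_add_adjacent_intervals
      (fre_cont.intervalIntegrable 0 1) (fre_cont.intervalIntegrable 1 μ)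
      (μ := MeasureTheory.volume)
    have h01 : ‖∫ ζ in (0:ℝ)..1, fre ζ‖ ≤ 1 := by
      have := intervalIntegral.norm_integral_le_of_norm_le_const
        (C := 1) (f := fre) (a := (0:ℝ)) (b := 1) (fun x _ => (fre_norm x).le)
      simpa using this
    have h1μ := key μ h1
    calc ‖∫ ζ in (0:ℝ)..μ, fre ζ‖
        = ‖(∫ ζ in (0:ℝ)..1, fre ζ) + ∫ ζ in (1:ℝ)..μ, fre ζ‖ := by rw [hsplit]
      _ ≤ ‖∫ ζ in (0:ℝ)..1, fre ζ‖ + ‖∫ ζ in (1:ℝ)..μ, fre ζ‖ := norm_add_le _ _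
      _ ≤ 1 + 1/2 := add_le_add h01 h1μ
      _ = 3/2 := by norm_num

lemma main_all (μ : ℝ) : ‖∫ ζ in (0:ℝ)..μ, fre ζ‖ ≤ 3/2 := by
  rcases le_or_gt 0 μ with h | h
  · exact main_nonneg μ h
  · have heq : ∫ ζ in (0:ℝ)..μ, fre ζ = -∫ ζ in (0:ℝ)..(-μ), fre ζ := by
      have h1 : ∫ ζ in (0:ℝ)..μ, fre ζ = ∫ ζ in (0:ℝ)..μ, fre (-ζ) := by
        simp [fre_even]
      rw [h1, intervalIntegral.integral_comp_neg fre, neg_zero,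
        intervalIntegral.integral_symm]
    rw [heq, norm_neg]
    exact main_nonneg (-μ) (by linarith)

/-- For all real μ, the absolute value of the integral from 0 to μ of
`e^{-2iζ²} dζ` is at most √3. -/
theorem abs_fresnel_integral_le_sqrt_three (μ : ℝ) :
    ‖∫ ζ in (0:ℝ)..μ, Complex.exp (-2 * Complex.I * (ζ:ℂ)^2)‖ ≤ Real.sqrt 3 := by
  have h1 : ‖∫ ζ in (0:ℝ)..μ, fre ζ‖ ≤ 3/2 := main_all μ
  have h2 : (3/2 : ℝ) ≤ Real.sqrt 3 := by
    nlinarith [Real.sq_sqrt (by norm_num : (0:ℝ) ≤ 3), Real.sqrt_nonneg 3]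
  exact le_trans h1 h2
end

section
/- Let L > 0 and let f : [0, L] → ℂ be absolutely continuous with f' ∈ L¹([0, L]). Then for all t ≠ 0, |∫₀^L f(λ) e^{-2iλ²t} dλ| ≤ (|f(0)| + 2∫₀^L |f'(λ)| dλ) · √3 / |t|^{1/2}. -/
open MeasureTheory Complex intervalIntegral

noncomputable def ee (t : ℝ) (l : ℝ) : ℂ := Complex.exp (-2 * Complex.I * (l:ℂ)^2 * (t:ℂ))

lemma norm_ee (t l : ℝ) : ‖ee t l‖ = 1 := by
  simp only [ee, Complex.norm_exp]
  have : (-2 * Complex.I * (l:ℂ)^2 * (t:ℂ)).re = 0 := by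
    have h : (-2 * Complex.I * (l:ℂ)^2 * (t:ℂ)) = Complex.I * ((-2 * l^2 * t : ℝ) : ℂ) := by
      push_cast; ring
    rw [h]; simp [pow_two]
  rw [this, Real.exp_zero]

lemma cont_ee (t : ℝ) : Continuous (ee t) := by
  unfold ee; fun_prop

lemma hasDerivAt_ee (t : ℝ) (l : ℝ) :
    HasDerivAt (ee t) (-4 * Complex.I * t * l * ee t l) l := by
  have h1 : HasDerivAt (fun z : ℂ => Complex.exp (-2 * Complex.I * z^2 * (t:ℂ)))
      (-4 * Complex.I * t * l * ee t l) (l:ℝ) := by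
    have h2 : HasDerivAt (fun z : ℂ => -2 * Complex.I * z^2 * (t:ℂ))
        (-2 * Complex.I * (2 * (l:ℂ)) * t) (l:ℂ) := by
      have := ((hasDerivAt_pow 2 (l:ℂ)).const_mul (-2 * Complex.I)).mul_const (t:ℂ)
      exact this.congr_deriv (by norm_num)
    have := h2.cexp
    exact this.congr_deriv (by unfold ee; ring)
  exact h1.comp_ofReal

lemma inv_hasDerivAt (t c l : ℝ) (hl : c ≤ l) (hc : 0 < c) :
    HasDerivAt (fun x : ℝ => (-4 * Complex.I * t * (x:ℂ))⁻¹)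
      ((4 * Complex.I * t)⁻¹ * ((l:ℂ)^2)⁻¹) l := by
  have hl0 : (l:ℂ) ≠ 0 := by
    exact_mod_cast ne_of_gt (lt_of_lt_of_le hc hl)
  have h1 : HasDerivAt (fun z : ℂ => (-4 * Complex.I * t * z)⁻¹)
      ((4 * Complex.I * t)⁻¹ * ((l:ℂ)^2)⁻¹) (l:ℂ) := by
    have h2 : HasDerivAt (fun z : ℂ => (-4 * Complex.I * t)⁻¹ * z⁻¹)
        ((-4 * Complex.I * t)⁻¹ * (-((l:ℂ)^2)⁻¹)) (l:ℂ) :=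
      (hasDerivAt_inv hl0).const_mul _
    have he : (fun z : ℂ => (-4 * Complex.I * t)⁻¹ * z⁻¹)
        = fun z : ℂ => (-4 * Complex.I * t * z)⁻¹ := by
      funext z; rw [← mul_inv]
    rw [he] at h2
    convert h2 using 1
    rw [neg_mul, neg_mul, inv_neg]; ring
  exact h1.comp_ofReal

lemma osc_ibp (t : ℝ) (ht : t ≠ 0) (c p b : ℝ) (hc : 0 < c) (hcp : c ≤ p) (hpb : p ≤ b) :
    ‖∫ l in p..b, ee t l‖ ≤ 3 / (4 * |t| * c) := by
  have ht' : 0 < |t| := abs_pos.mpr ht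
  have hp : 0 < p := lt_of_lt_of_le hc hcp
  have hb : 0 < b := lt_of_lt_of_le hp hpb
  set u : ℝ → ℂ := fun l => (-4 * Complex.I * t * (l:ℂ))⁻¹ with hu_def
  set u' : ℝ → ℂ := fun l => (4 * Complex.I * t)⁻¹ * ((l:ℂ)^2)⁻¹ with hu'_def
  set v' : ℝ → ℂ := fun l => -4 * Complex.I * t * l * ee t l with hv'_def
  have huicc : Set.uIcc p b = Set.Icc p b := Set.uIcc_of_le hpb
  have hmem : ∀ x ∈ Set.uIcc p b, 0 < x := by
    intro x hx; rw [huicc] at hx; exact lt_of_lt_of_le hp hx.1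
  have hu : ∀ x ∈ Set.uIcc p b, HasDerivAt u (u' x) x := by
    intro x hx
    exact inv_hasDerivAt t p x ((huicc ▸ hx).1) hp
  have hv : ∀ x ∈ Set.uIcc p b, HasDerivAt (ee t) (v' x) x := fun x _ => hasDerivAt_ee t x
  have hu'c : ContinuousOn u' (Set.uIcc p b) := by
    apply ContinuousOn.mul continuousOn_const
    apply ContinuousOn.inv₀
    · exact ((Complex.continuous_ofReal.continuousOn).pow 2)
    · intro x hx
      have hx0 := hmem x hx
      have hxc : (x:ℂ) ≠ 0 := by exact_mod_cast ne_of_gt hx0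
      exact pow_ne_zero 2 hxc
  have hu'i : IntervalIntegrable u' volume p b := hu'c.intervalIntegrable
  have hv'i : IntervalIntegrable v' volume p b := by
    apply Continuous.intervalIntegrable
    exact (((continuous_const.mul Complex.continuous_ofReal)).mul (cont_ee t))
  have hne : ∀ x ∈ Set.uIcc p b, (-4 * Complex.I * (t:ℂ) * (x:ℂ)) ≠ 0 := by
    intro x hx
    have hx0 := hmem x hx
    apply mul_ne_zero
    apply mul_ne_zero
    apply mul_ne_zero
    · norm_num
    · exact Complex.I_ne_zero
    · exact_mod_cast ht
    · exact_mod_cast ne_of_gt hx0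
  have key : ∫ l in p..b, ee t l = ∫ l in p..b, u l * v' l := by
    apply intervalIntegral.integral_congr
    intro x hx
    simp only [hu_def, hv'_def]
    rw [← mul_assoc, inv_mul_cancel₀ (hne x hx), one_mul]
  rw [key, intervalIntegral.integral_mul_deriv_eq_deriv_mul hu hv hu'i hv'i]
  have hnu : ∀ x : ℝ, 0 < x → ‖u x‖ = (4 * |t| * x)⁻¹ := by
    intro x hx
    simp only [hu_def, norm_inv]
    congr 1
    simp only [norm_mul, Complex.norm_I, Complex.norm_real, Real.norm_eq_abs]
    rw [abs_of_pos hx]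
    norm_num
  -- bound the boundary terms and remaining integral
  have hb1 : ‖u b * ee t b‖ ≤ (4 * |t| * c)⁻¹ := by
    rw [norm_mul, norm_ee, mul_one, hnu b hb]
    apply inv_anti₀ (by positivity)
    have : c ≤ b := le_trans hcp hpb
    nlinarith
  have hb2 : ‖u p * ee t p‖ ≤ (4 * |t| * c)⁻¹ := by
    rw [norm_mul, norm_ee, mul_one, hnu p hp]
    apply inv_anti₀ (by positivity)
    nlinarith
  have hb3 : ‖∫ l in p..b, u' l * ee t l‖ ≤ (4 * |t| * c)⁻¹ := by
    have h1 : ‖∫ l in p..b, u' l * ee t l‖ ≤ ∫ l in p..b, ‖u' l * ee t l‖ :=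
      intervalIntegral.norm_integral_le_integral_norm hpb
    have h2 : ∫ l in p..b, ‖u' l * ee t l‖ = ∫ l in p..b, (4*|t|)⁻¹ * (l:ℝ) ^ (-2:ℤ) := by
      apply intervalIntegral.integral_congr
      intro x hx
      have hx0 := hmem x hx
      show ‖u' x * ee t x‖ = (4*|t|)⁻¹ * (x:ℝ) ^ (-2:ℤ)
      rw [norm_mul, norm_ee, mul_one]
      simp only [hu'_def, norm_mul, norm_inv, norm_pow, Complex.norm_I, Complex.norm_real,
        Real.norm_eq_abs]
      rw [zpow_neg, zpow_two]
      simp [Complex.norm_real, Complex.norm_I, abs_of_pos hx0, mul_inv, pow_two]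
    have h3 : ∫ l in p..b, (4*|t|)⁻¹ * (l:ℝ) ^ (-2:ℤ)
        = (4*|t|)⁻¹ * ((b ^ (-1:ℤ) - p ^ (-1:ℤ)) / (-1:ℤ)) := by
      rw [intervalIntegral.integral_const_mul, integral_zpow]
      · norm_num
      · right
        constructor
        · norm_num
        · rw [huicc]
          intro h
          exact absurd h.1 (not_le.mpr hp)
    refine le_trans h1 ?_
    rw [h2, h3]
    have h4 : (b:ℝ) ^ (-1:ℤ) - p ^ (-1:ℤ) = b⁻¹ - p⁻¹ := by norm_num
    calc (4*|t|)⁻¹ * (((b:ℝ) ^ (-1:ℤ) - p ^ (-1:ℤ)) / (-1:ℤ))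
        = (4*|t|)⁻¹ * (p⁻¹ - b⁻¹) := by rw [h4]; push_cast; ring
      _ ≤ (4*|t|)⁻¹ * c⁻¹ := by
          apply mul_le_mul_of_nonneg_left _ (by positivity)
          have : p⁻¹ ≤ c⁻¹ := inv_anti₀ hc hcp
          have hbpos : 0 < b⁻¹ := by positivity
          linarith
      _ = (4 * |t| * c)⁻¹ := (mul_inv _ _).symm
  calc ‖u b * ee t b - u p * ee t p - ∫ l in p..b, u' l * ee t l‖
      ≤ ‖u b * ee t b - u p * ee t p‖ + ‖∫ l in p..b, u' l * ee t l‖ := norm_sub_le _ _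
    _ ≤ (‖u b * ee t b‖ + ‖u p * ee t p‖) + ‖∫ l in p..b, u' l * ee t l‖ := by
        have := norm_sub_le (u b * ee t b) (u p * ee t p); linarith
    _ ≤ (4 * |t| * c)⁻¹ + (4 * |t| * c)⁻¹ + (4 * |t| * c)⁻¹ := by linarith
    _ = 3 / (4 * |t| * c) := by rw [div_eq_mul_inv]; ring

lemma osc (t : ℝ) (ht : t ≠ 0) (a b : ℝ) (ha : 0 ≤ a) (hab : a ≤ b) :
    ‖∫ l in a..b, ee t l‖ ≤ Real.sqrt 3 / Real.sqrt |t| := by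
  have ht' : 0 < |t| := abs_pos.mpr ht
  set s := Real.sqrt |t| with hs_def
  have hs : 0 < s := Real.sqrt_pos.mpr ht'
  have hs2 : s ^ 2 = |t| := Real.sq_sqrt (abs_nonneg t)
  have h3 : (Real.sqrt 3) ^ 2 = 3 := Real.sq_sqrt (by norm_num)
  have h3pos : 0 < Real.sqrt 3 := Real.sqrt_pos.mpr (by norm_num)
  set c := Real.sqrt 3 / (2 * s) with hc_def
  have hc : 0 < c := by positivity
  set p := min (max a c) b with hp_def
  have hap : a ≤ p := le_min (le_max_left a c) hab
  have hpb : p ≤ b := min_le_right _ _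
  have hpa : p - a ≤ c := by
    rcases le_or_gt a c with h | h
    · have : p ≤ c := le_trans (min_le_left _ _) (max_le h le_rfl)
      linarith
    · have : p ≤ a := le_trans (min_le_left _ _) (max_le le_rfl h.le)
      linarith
  have hint : ∀ x y : ℝ, IntervalIntegrable (ee t) volume x y :=
    fun x y => (cont_ee t).intervalIntegrable x y
  have hsplit : ∫ l in a..b, ee t l = (∫ l in a..p, ee t l) + ∫ l in p..b, ee t l :=
    (intervalIntegral.integral_add_adjacent_intervals (hint a p) (hint p b)).symm
  have hb1 : ‖∫ l in a..p, ee t l‖ ≤ c := by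
    have := intervalIntegral.norm_integral_le_of_norm_le_const
      (C := 1) (f := ee t) (a := a) (b := p) (fun x _ => le_of_eq (norm_ee t x))
    rw [one_mul, _root_.abs_of_nonneg (by linarith : (0:ℝ) ≤ p - a)] at this
    linarith
  have hb2 : ‖∫ l in p..b, ee t l‖ ≤ 3 / (4 * |t| * c) := by
    rcases eq_or_lt_of_le hpb with h | h
    · rw [h, intervalIntegral.integral_same]
      simp only [norm_zero]
      positivity
    · have hcp : c ≤ p := by
        rcases le_total (max a c) b with h1 | h1
        · rw [hp_def, min_eq_left h1]; exact le_max_right a c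
        · exfalso; rw [hp_def, min_eq_right h1] at h; exact lt_irrefl b h
      exact osc_ibp t ht c p b hc hcp hpb
  have hsne : s ≠ 0 := hs.ne'
  have hkey : c + 3 / (4 * |t| * c) = Real.sqrt 3 / s := by
    have e1 : 4 * |t| * c = 2 * s * Real.sqrt 3 := by
      rw [hc_def, ← hs2]; field_simp; ring
    have e2 : 3 / (2 * s * Real.sqrt 3) = Real.sqrt 3 / (2 * s) := by
      rw [div_eq_div_iff (by positivity) (by positivity)]
      nlinarith [h3]
    rw [e1, e2, hc_def]
    field_simp
    ring
  calc ‖∫ l in a..b, ee t l‖ ≤ ‖∫ l in a..p, ee t l‖ + ‖∫ l in p..b, ee t l‖ := by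
        rw [hsplit]; exact norm_add_le _ _
    _ ≤ c + 3 / (4 * |t| * c) := add_le_add hb1 hb2
    _ = Real.sqrt 3 / s := hkey

lemma swap_lemma (L : ℝ) (hL : 0 < L) (t : ℝ) (f' : ℝ → ℂ)
    (hf' : IntervalIntegrable f' volume 0 L) :
    ∫ l in (0:ℝ)..L, (∫ s in (0:ℝ)..l, f' s) * ee t l
      = ∫ s in (0:ℝ)..L, f' s * ∫ l in s..L, ee t l := by
  set μ := volume.restrict (Set.Ioc (0:ℝ) L) with hμ
  have hf'I : Integrable f' μ := hf'.1
  have heeI : Integrable (ee t) μ := (cont_ee t).integrableOn_Ioc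
  set S : Set (ℝ × ℝ) := {q : ℝ × ℝ | q.2 ≤ q.1} with hS_def
  have hS : MeasurableSet S := measurableSet_le measurable_snd measurable_fst
  set h : ℝ × ℝ → ℂ := fun q => ee t q.1 * f' q.2 with hh_def
  have hh : Integrable h (μ.prod μ) := heeI.mul_prod hf'I
  have hg : Integrable (S.indicator h) (μ.prod μ) := hh.indicator hS
  have hswap : ∫ l, ∫ s, S.indicator h (l, s) ∂μ ∂μ = ∫ s, ∫ l, S.indicator h (l, s) ∂μ ∂μ :=
    integral_integral_swap hg
  have hL' : (0:ℝ) ≤ L := hL.le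
  -- LHS
  have lhs_eq : ∫ l in (0:ℝ)..L, (∫ s in (0:ℝ)..l, f' s) * ee t l
      = ∫ l, ∫ s, S.indicator h (l, s) ∂μ ∂μ := by
    rw [intervalIntegral.integral_of_le hL']
    apply setIntegral_congr_fun measurableSet_Ioc
    intro l hl
    have hfix : (fun s => S.indicator h (l, s)) = (Set.Iic l).indicator (fun s => ee t l * f' s) := by
      funext s
      by_cases hsl : s ≤ l
      · simp [Set.indicator, hS_def, hh_def, hsl]
      · simp [Set.indicator, hS_def, hh_def, hsl]
    show (∫ s in (0:ℝ)..l, f' s) * ee t l = ∫ s, S.indicator h (l, s) ∂μ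
    rw [hfix, MeasureTheory.integral_indicator measurableSet_Iic, hμ, Measure.restrict_restrict measurableSet_Iic]
    have hset : Set.Iic l ∩ Set.Ioc 0 L = Set.Ioc 0 l := by
      ext x
      simp only [Set.mem_inter_iff, Set.mem_Iic, Set.mem_Ioc]
      constructor
      · rintro ⟨h1, h2, h3⟩; exact ⟨h2, h1⟩
      · rintro ⟨h1, h2⟩; exact ⟨h2, h1, le_trans h2 hl.2⟩
    rw [hset, MeasureTheory.integral_const_mul, ← intervalIntegral.integral_of_le hl.1.le, mul_comm]
  -- RHS
  have rhs_eq : ∫ s in (0:ℝ)..L, f' s * ∫ l in s..L, ee t l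
      = ∫ s, ∫ l, S.indicator h (l, s) ∂μ ∂μ := by
    rw [intervalIntegral.integral_of_le hL']
    apply setIntegral_congr_fun measurableSet_Ioc
    intro s hs
    have hfix : (fun l => S.indicator h (l, s)) = (Set.Ici s).indicator (fun l => ee t l * f' s) := by
      funext l
      by_cases hsl : s ≤ l
      · simp [Set.indicator, hS_def, hh_def, hsl]
      · simp [Set.indicator, hS_def, hh_def, hsl]
    show f' s * (∫ l in s..L, ee t l) = ∫ l, S.indicator h (l, s) ∂μ
    rw [hfix, MeasureTheory.integral_indicator measurableSet_Ici, hμ, Measure.restrict_restrict measurableSet_Ici]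
    have hset : Set.Ici s ∩ Set.Ioc 0 L = Set.Icc s L := by
      ext x
      simp only [Set.mem_inter_iff, Set.mem_Ici, Set.mem_Ioc, Set.mem_Icc]
      constructor
      · rintro ⟨h1, _, h3⟩; exact ⟨h1, h3⟩
      · rintro ⟨h1, h2⟩; exact ⟨h1, lt_of_lt_of_le hs.1 h1, h2⟩
    rw [hset, integral_Icc_eq_integral_Ioc, MeasureTheory.integral_mul_const,
      ← intervalIntegral.integral_of_le hs.2, mul_comm]
  rw [lhs_eq, rhs_eq, hswap]



/-- Let `L > 0` and let `f : [0,L] → ℂ` be absolutely continuous with derivative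
`f' ∈ L¹([0,L])` (expressed via the fundamental theorem of calculus).  Then for all
`t ≠ 0`, `|∫₀^L f(λ) e^{-2iλ²t} dλ| ≤ (|f(0)| + 2∫₀^L |f'(λ)| dλ) · √3 / |t|^{1/2}`. -/
theorem integral_decay_one_half (L : ℝ) (hL : 0 < L) (f f' : ℝ → ℂ)
    (hf' : IntervalIntegrable f' MeasureTheory.volume 0 L)
    (hFTC : ∀ x ∈ Set.Icc (0:ℝ) L, f x = f 0 + ∫ s in (0:ℝ)..x, f' s)
    (t : ℝ) (ht : t ≠ 0) :
    ‖∫ l in (0:ℝ)..L, f l * Complex.exp (-2 * Complex.I * (l:ℂ)^2 * (t:ℂ))‖ ≤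
      (‖f 0‖ + 2 * ∫ l in (0:ℝ)..L, ‖f' l‖) * Real.sqrt 3 / Real.sqrt |t| := by
  have hL' : (0:ℝ) ≤ L := hL.le
  have huicc : Set.uIcc (0:ℝ) L = Set.Icc 0 L := Set.uIcc_of_le hL'
  set K := Real.sqrt 3 / Real.sqrt |t| with hK_def
  have hK : 0 ≤ K := by positivity
  set E : ℝ → ℂ := fun s => ∫ l in s..L, ee t l with hE_def
  -- continuity facts
  have hprim : ContinuousOn (fun l => ∫ s in (0:ℝ)..l, f' s) (Set.uIcc (0:ℝ) L) :=
    intervalIntegral.continuousOn_primitive_interval' hf' Set.left_mem_uIcc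
  have hEcont : ContinuousOn E (Set.uIcc (0:ℝ) L) := by
    apply intervalIntegral.continuousOn_primitive_interval_left
    exact (cont_ee t).integrableOn_uIcc
  -- rewrite integrand using FTC
  have step1 : ∫ l in (0:ℝ)..L, f l * Complex.exp (-2 * Complex.I * (l:ℂ)^2 * (t:ℂ))
      = ∫ l in (0:ℝ)..L, (f 0 + ∫ s in (0:ℝ)..l, f' s) * ee t l := by
    apply intervalIntegral.integral_congr
    intro x hx
    rw [huicc] at hx
    show f x * Complex.exp (-2 * Complex.I * (x:ℂ)^2 * (t:ℂ)) = _
    rw [hFTC x hx]; rfl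
  have i1 : IntervalIntegrable (fun l => f 0 * ee t l) volume 0 L :=
    (continuous_const.mul (cont_ee t)).intervalIntegrable 0 L
  have i2 : IntervalIntegrable (fun l => (∫ s in (0:ℝ)..l, f' s) * ee t l) volume 0 L :=
    (hprim.mul (cont_ee t).continuousOn).intervalIntegrable
  have step2 : ∫ l in (0:ℝ)..L, (f 0 + ∫ s in (0:ℝ)..l, f' s) * ee t l
      = (f 0 * ∫ l in (0:ℝ)..L, ee t l) + ∫ s in (0:ℝ)..L, f' s * E s := by
    have : (fun l => (f 0 + ∫ s in (0:ℝ)..l, f' s) * ee t l)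
        = fun l => f 0 * ee t l + (∫ s in (0:ℝ)..l, f' s) * ee t l := by
      funext l; ring
    rw [this, intervalIntegral.integral_add i1 i2, intervalIntegral.integral_const_mul,
      swap_lemma L hL t f' hf']
  -- bounds
  have b1 : ‖f 0 * ∫ l in (0:ℝ)..L, ee t l‖ ≤ ‖f 0‖ * K := by
    rw [norm_mul]
    exact mul_le_mul_of_nonneg_left (osc t ht 0 L le_rfl hL') (norm_nonneg _)
  have hfE : IntervalIntegrable (fun s => f' s * E s) volume 0 L :=
    hf'.mul_continuousOn hEcont
  have b2 : ‖∫ s in (0:ℝ)..L, f' s * E s‖ ≤ (∫ s in (0:ℝ)..L, ‖f' s‖) * K := by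
    calc ‖∫ s in (0:ℝ)..L, f' s * E s‖ ≤ ∫ s in (0:ℝ)..L, ‖f' s * E s‖ :=
          intervalIntegral.norm_integral_le_integral_norm hL'
      _ ≤ ∫ s in (0:ℝ)..L, ‖f' s‖ * K := by
          apply intervalIntegral.integral_mono_on hL' hfE.norm ((hf'.norm).mul_const K)
          intro x hx
          rw [norm_mul]
          exact mul_le_mul_of_nonneg_left (osc t ht x L hx.1 hx.2) (norm_nonneg _)
      _ = (∫ s in (0:ℝ)..L, ‖f' s‖) * K := intervalIntegral.integral_mul_const K _
  have hnn : 0 ≤ ∫ s in (0:ℝ)..L, ‖f' s‖ :=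
    intervalIntegral.integral_nonneg hL' (fun x _ => norm_nonneg _)
  calc ‖∫ l in (0:ℝ)..L, f l * Complex.exp (-2 * Complex.I * (l:ℂ)^2 * (t:ℂ))‖
      = ‖(f 0 * ∫ l in (0:ℝ)..L, ee t l) + ∫ s in (0:ℝ)..L, f' s * E s‖ := by
        rw [step1, step2]
    _ ≤ ‖f 0 * ∫ l in (0:ℝ)..L, ee t l‖ + ‖∫ s in (0:ℝ)..L, f' s * E s‖ := norm_add_le _ _
    _ ≤ ‖f 0‖ * K + (∫ s in (0:ℝ)..L, ‖f' s‖) * K := add_le_add b1 b2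
    _ ≤ (‖f 0‖ + 2 * ∫ l in (0:ℝ)..L, ‖f' l‖) * K := by nlinarith
    _ = (‖f 0‖ + 2 * ∫ l in (0:ℝ)..L, ‖f' l‖) * Real.sqrt 3 / Real.sqrt |t| := by
        rw [hK_def, mul_div_assoc]
end

section
/- Fix L > 0 and an integer k ≥ 2. Suppose f ∈ C^k([L, ∞), ℂ) satisfies f(L) = f'(L) = ⋯ = f^{(k-1)}(L) = 0, the improper integral lim_{R→∞} ∫_L^R f(λ) e^{-2iλ²t} dλ exists for t ≠ 0, and sup_{λ>L} |λ² (A^k f)(λ)| < ∞, where (Af)(λ) = d/dλ (f(λ)/λ). Then |lim_{R→∞} ∫_L^R f(λ) e^{-2iλ²t} dλ| ≤ (1/(L · 4^k · |t|^k)) · sup_{λ>L} |λ² (A^k f)(λ)|. -/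
open Filter Topology

open Set in

noncomputable def Bop (L : ℝ) (g : ℝ → ℂ) : ℝ → ℂ :=
  derivWithin (fun x : ℝ => g x * ((x:ℂ))⁻¹) (Set.Ici L)

lemma vanish_mul (L : ℝ) (hL : 0 < L) (j : ℕ) (g : ℝ → ℂ)
    (hg : ContDiffOn ℝ j g (Set.Ici L))
    (hv : ∀ i ≤ j, iteratedDerivWithin i g (Set.Ici L) L = 0) :
    iteratedDerivWithin j (fun x : ℝ => g x * ((x:ℂ))⁻¹) (Set.Ici L) L = 0 := by
  have hu : UniqueDiffOn ℝ (Set.Ici L) := uniqueDiffOn_Ici L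
  have hxL : L ∈ Set.Ici L := Set.self_mem_Ici
  have hinv : ContDiffOn ℝ (j : ℕ) (fun x : ℝ => ((x:ℂ))⁻¹) (Set.Ici L) := by
    apply ContDiffOn.inv
    · exact (Complex.ofRealCLM.contDiff.contDiffOn :)
    · intro x hx
      simp only [ne_eq, Complex.ofReal_eq_zero]
      exact ne_of_gt (lt_of_lt_of_le hL hx)
  have hb := norm_iteratedFDerivWithin_mul_le (𝕜 := ℝ) hg hinv hu hxL (le_refl (j : WithTop ℕ∞))
  have hz : ∀ i ∈ Finset.range (j+1),
      (j.choose i : ℝ) * ‖iteratedFDerivWithin ℝ i g (Set.Ici L) L‖ *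
        ‖iteratedFDerivWithin ℝ (j - i) (fun x : ℝ => ((x:ℂ))⁻¹) (Set.Ici L) L‖ = 0 := by
    intro i hi
    have : ‖iteratedFDerivWithin ℝ i g (Set.Ici L) L‖ = 0 := by
      rw [norm_iteratedFDerivWithin_eq_norm_iteratedDerivWithin,
        hv i (by simpa using Nat.lt_succ_iff.mp (Finset.mem_range.mp hi)), norm_zero]
    simp [this]
  rw [Finset.sum_eq_zero hz] at hb
  have := (norm_iteratedFDerivWithin_eq_norm_iteratedDerivWithin (𝕜 := ℝ)
    (n := j) (f := fun x : ℝ => g x * ((x:ℂ))⁻¹) (s := Set.Ici L) (x := L)).symm.trans_le hb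
  exact norm_eq_zero.mp (le_antisymm this (norm_nonneg _))

open Set in
lemma smooth_vanish (L : ℝ) (hL : 0 < L) (k : ℕ) (f : ℝ → ℂ)
    (hf : ContDiffOn ℝ k f (Set.Ici L))
    (hvanish : ∀ n < k, iteratedDerivWithin n f (Set.Ici L) L = 0) :
    ∀ n ≤ k, ContDiffOn ℝ ((k-n : ℕ)) ((Bop L)^[n] f) (Set.Ici L) ∧
      ∀ j < k - n, iteratedDerivWithin j ((Bop L)^[n] f) (Set.Ici L) L = 0 := by
  have hu : UniqueDiffOn ℝ (Set.Ici L) := uniqueDiffOn_Ici L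
  have hinv : ∀ m : ℕ, ContDiffOn ℝ (m : ℕ) (fun x : ℝ => ((x:ℂ))⁻¹) (Set.Ici L) := by
    intro m
    apply ContDiffOn.inv
    · exact (Complex.ofRealCLM.contDiff.contDiffOn :)
    · intro x hx
      simp only [ne_eq, Complex.ofReal_eq_zero]
      exact ne_of_gt (lt_of_lt_of_le hL hx)
  intro n
  induction n with
  | zero => intro _; simpa using ⟨hf, hvanish⟩
  | succ n ih =>
    intro hn1
    obtain ⟨ih1, ih2⟩ := ih (le_of_lt hn1)
    have hmul : ContDiffOn ℝ ((k-n : ℕ)) (fun x : ℝ => ((Bop L)^[n] f) x * ((x:ℂ))⁻¹)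
        (Set.Ici L) := ih1.mul (hinv _)
    constructor
    · rw [Function.iterate_succ_apply']
      apply hmul.derivWithin hu
      have : (k - (n+1) : ℕ) + 1 = (k - n : ℕ) := by omega
      exact_mod_cast le_of_eq (by exact_mod_cast congrArg (Nat.cast : ℕ → WithTop ℕ∞) this)
    · intro j hj
      rw [Function.iterate_succ_apply']
      show iteratedDerivWithin j (Bop L ((Bop L)^[n] f)) (Set.Ici L) L = 0
      unfold Bop
      rw [← iteratedDerivWithin_succ']
      apply vanish_mul L hL (j+1) _ (ih1.of_le (by exact_mod_cast by omega))
      intro i hi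
      exact ih2 i (by omega)

lemma agree (L : ℝ) (hL : 0 < L) (f : ℝ → ℂ) (A : (ℝ → ℂ) → (ℝ → ℂ))
    (hA : ∀ g : ℝ → ℂ, A g = deriv (fun x : ℝ => g x / (x:ℂ))) :
    ∀ n, ∀ x ∈ Set.Ioi L, (A^[n] f) x = ((Bop L)^[n] f) x := by
  intro n
  induction n with
  | zero => intro x _; rfl
  | succ n ih =>
    intro x hx
    rw [Function.iterate_succ_apply', Function.iterate_succ_apply', hA]
    show deriv (fun y : ℝ => (A^[n] f) y / (y:ℂ)) x = Bop L ((Bop L)^[n] f) x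
    rw [show Bop L ((Bop L)^[n] f)
        = derivWithin (fun y : ℝ => ((Bop L)^[n] f) y * ((y:ℂ))⁻¹) (Set.Ici L) from rfl,
      derivWithin_of_mem_nhds (Ici_mem_nhds hx)]
    apply Filter.EventuallyEq.deriv_eq
    filter_upwards [eventually_nhds_iff.mpr ⟨Set.Ioi L, fun y hy => hy, isOpen_Ioi, hx⟩] with y hy
    rw [div_eq_mul_inv, ih y hy]

lemma rec_bound (c M : ℝ) (hc : 0 < c) : ∀ (k : ℕ) (T b : ℕ → ℝ),
    (∀ n < k, T n ≤ (b n + T (n+1)) / c) → T k ≤ M →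
    T 0 ≤ (∑ j ∈ Finset.range k, b j / c^(j+1)) + M / c^k := by
  intro k
  induction k with
  | zero => intro T b _ h; simpa using h
  | succ k ih =>
    intro T b h hk
    have h1 := ih (fun n => T (n+1)) (fun n => b (n+1)) (fun n hn => h (n+1) (by omega)) hk
    have h0 := h 0 (by omega)
    have key : (b 0 + ((∑ j ∈ Finset.range k, b (j+1) / c^(j+1)) + M / c^k)) / c
        = (∑ j ∈ Finset.range (k+1), b j / c^(j+1)) + M / c^(k+1) := by
      have hS : (∑ j ∈ Finset.range k, b (j+1) / c^(j+1)) / c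
          = ∑ j ∈ Finset.range k, b (j+1) / c^(j+1+1) := by
        rw [Finset.sum_div]
        refine Finset.sum_congr rfl fun j _ => ?_
        rw [div_div, ← pow_succ]
      rw [Finset.sum_range_succ', ← hS]
      field_simp
      ring
    calc T 0 ≤ (b 0 + T 1) / c := h0
      _ ≤ (b 0 + ((∑ j ∈ Finset.range k, b (j+1) / c^(j+1)) + M / c^k)) / c := by
          gcongr
      _ = _ := key

open Set in
/-- Fix `L > 0` and an integer `k ≥ 2`.  Suppose `f ∈ C^k([L,∞),ℂ)` satisfies
`f(L) = f'(L) = ⋯ = f^{(k-1)}(L) = 0`, the improper integral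
`lim_{R→∞} ∫_L^R f(λ) e^{-2iλ²t} dλ` exists for `t ≠ 0`, and
`sup_{λ>L} |λ² (A^k f)(λ)| < ∞` where `(Af)(λ) = d/dλ (f(λ)/λ)`.  (One also assumes
the boundary terms at infinity vanish: `(A^n f)(λ)/λ → 0` as `λ → ∞` for `n < k`.)
Then `‖lim‖ ≤ (1/(L·4^k·|t|^k)) · sup_{λ>L} |λ² (A^k f)(λ)|`. -/
theorem improper_integral_decay (L : ℝ) (hL : 0 < L) (k : ℕ) (hk : 2 ≤ k)
    (f : ℝ → ℂ) (t : ℝ) (ht : t ≠ 0)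
    (A : (ℝ → ℂ) → (ℝ → ℂ))
    (hA : ∀ g : ℝ → ℂ, A g = deriv (fun x : ℝ => g x / (x:ℂ)))
    (hf : ContDiffOn ℝ k f (Set.Ici L))
    (hvanish : ∀ n < k, iteratedDerivWithin n f (Set.Ici L) L = 0)
    (hdecay : ∀ n < k, Tendsto (fun l : ℝ => (A^[n] f) l / (l:ℂ)) atTop (nhds 0))
    (hbdd : BddAbove ((fun l : ℝ => ‖(l:ℂ)^2 * (A^[k] f) l‖) '' Set.Ioi L))
    (I : ℂ)
    (hI : Tendsto (fun R : ℝ =>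
        ∫ l in L..R, f l * Complex.exp (-2 * Complex.I * (l:ℂ)^2 * (t:ℂ)))
      atTop (nhds I)) :
    ‖I‖ ≤ (1 / (L * 4^k * |t|^k)) *
      sSup ((fun l : ℝ => ‖(l:ℂ)^2 * (A^[k] f) l‖) '' Set.Ioi L) := by
  have hu : UniqueDiffOn ℝ (Set.Ici L) := uniqueDiffOn_Ici L
  set e : ℝ → ℂ := fun l : ℝ => Complex.exp (-2 * Complex.I * (l:ℂ)^2 * (t:ℂ)) with he
  set M : ℝ := sSup ((fun l : ℝ => ‖(l:ℂ)^2 * (A^[k] f) l‖) '' Set.Ioi L) with hM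
  set c : ℂ := (-4) * Complex.I * (t:ℂ) with hcdef
  have ht' : 0 < |t| := abs_pos.mpr ht
  have hcnorm : ‖c‖ = 4 * |t| := by
    simp [hcdef, map_mul]
  have hcpos : 0 < ‖c‖ := by rw [hcnorm]; positivity
  have hc0 : c ≠ 0 := by intro h; rw [h, norm_zero] at hcpos; exact lt_irrefl _ hcpos
  have hsv := smooth_vanish L hL k f hf hvanish
  have hagree := agree L hL f A hA
  -- norm of e is 1
  have heone : ∀ x : ℝ, ‖e x‖ = 1 := by
    intro x
    rw [he]
    simp only [Complex.norm_exp]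
    norm_num [Complex.mul_re, Complex.mul_im, ← Complex.ofReal_pow]
  -- smoothness of A^[n] f on Ioi L
  have hgsm : ∀ n ≤ k, ContDiffOn ℝ ((k-n : ℕ)) (A^[n] f) (Set.Ioi L) := by
    intro n hn
    exact (((hsv n hn).1).mono Set.Ioi_subset_Ici_self).congr fun x hx => hagree n x hx
  have hgct : ∀ n ≤ k, ContinuousOn (A^[n] f) (Set.Ioi L) := fun n hn => (hgsm n hn).continuousOn
  -- limits at L from the right
  have hlimL : ∀ n < k, Tendsto (A^[n] f) (𝓝[>] L) (𝓝 0) := by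
    intro n hn
    have h1 : ContinuousOn ((Bop L)^[n] f) (Set.Ici L) := (hsv n hn.le).1.continuousOn
    have h2 : ((Bop L)^[n] f) L = 0 := by
      have := (hsv n hn.le).2 0 (by omega)
      simpa using this
    have h3 : Tendsto ((Bop L)^[n] f) (𝓝[>] L) (𝓝 0) := by
      rw [← h2]
      exact (h1 L Set.self_mem_Ici).mono_left (nhdsWithin_mono L Set.Ioi_subset_Ici_self)
    exact h3.congr' (by
      filter_upwards [self_mem_nhdsWithin] with x hx using (hagree n x hx).symm)
  -- derivative of e
  have hE : ∀ x : ℝ, HasDerivAt e (c * x * e x) x := by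
    intro x
    have h2 : HasDerivAt (fun y : ℂ => -2 * Complex.I * y^2 * (t:ℂ))
        (-2 * Complex.I * (2 * (x:ℂ)^1) * t) (x:ℂ) :=
      ((hasDerivAt_pow 2 (x:ℂ)).const_mul (-2 * Complex.I)).mul_const (t:ℂ)
    have h3 := h2.comp_ofReal
    have h4 : HasDerivAt (fun y : ℝ => -2 * Complex.I * (y:ℂ)^2 * (t:ℂ)) (c * x) x := by
      convert h3 using 1
      rw [hcdef]; push_cast; ring
    have := h4.cexp
    convert this using 1
    ring
  -- boundedness
  have hMle : ∀ l : ℝ, L < l → ‖(A^[k] f) l‖ ≤ M / l^2 := by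
    intro l hl
    have hl0 : (0:ℝ) < l := lt_trans hL hl
    have hmem : ‖(l:ℂ)^2 * (A^[k] f) l‖ ∈
        ((fun l : ℝ => ‖(l:ℂ)^2 * (A^[k] f) l‖) '' Set.Ioi L) := ⟨l, hl, rfl⟩
    have := le_csSup hbdd hmem
    rw [norm_mul] at this
    have hnl : ‖((l:ℂ))^2‖ = l^2 := by
      rw [norm_pow]
      simp [abs_of_pos hl0]
    rw [hnl] at this
    rw [le_div_iff₀ (by positivity)]
    linarith [this]
  have hM0 : 0 ≤ M := by
    have hmem : ‖((L+1:ℝ):ℂ)^2 * (A^[k] f) (L+1)‖ ∈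
        ((fun l : ℝ => ‖(l:ℂ)^2 * (A^[k] f) l‖) '' Set.Ioi L) :=
      ⟨L+1, lt_add_of_pos_right L one_pos, by norm_num⟩
    exact le_trans (norm_nonneg _) (le_csSup hbdd hmem)
  -- derivative of A^[n] f / x
  have hgd : ∀ n < k, ∀ x ∈ Set.Ioi L, HasDerivAt (fun y : ℝ => (A^[n] f) y / (y:ℂ))
      ((A^[n+1] f) x) x := by
    intro n hn x hx
    have hx0 : (0:ℝ) < x := lt_trans hL hx
    have hdiffg : DifferentiableAt ℝ (A^[n] f) x := by
      have h1 : DifferentiableOn ℝ (A^[n] f) (Set.Ioi L) := by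
        apply (hgsm n hn.le).differentiableOn
        exact_mod_cast (show k - n ≠ 0 by omega)
      exact h1.differentiableAt (Ioi_mem_nhds hx)
    have hdiffc : DifferentiableAt ℝ (fun y : ℝ => (y:ℂ)) x :=
      Complex.ofRealCLM.differentiable.differentiableAt
    have hdiv : DifferentiableAt ℝ (fun y : ℝ => (A^[n] f) y / (y:ℂ)) x :=
      hdiffg.div hdiffc (by exact_mod_cast hx0.ne')
    have := hdiv.hasDerivAt
    have heq : deriv (fun y : ℝ => (A^[n] f) y / (y:ℂ)) x = (A^[n+1] f) x := by
      rw [Function.iterate_succ_apply', hA]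
    rwa [heq] at this
  have hecont : Continuous e := by
    rw [he]
    fun_prop
  -- integrability of A^[n] f * e on intervals inside Ioi L
  have hInt : ∀ n, n ≤ k → ∀ a R : ℝ, L < a → a ≤ R →
      IntervalIntegrable (fun x : ℝ => (A^[n] f) x * e x) MeasureTheory.volume a R := by
    intro n hn a R ha haR
    apply ContinuousOn.intervalIntegrable
    apply ContinuousOn.mul ((hgct n hn).mono ?_) hecont.continuousOn
    rw [Set.uIcc_of_le haR]
    exact fun x hx => lt_of_lt_of_le ha hx.1
  -- integrability of f * e on [L, x]
  have hIntL : ∀ x : ℝ, L ≤ x →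
      IntervalIntegrable (fun l : ℝ => f l * e l) MeasureTheory.volume L x := by
    intro x hx
    apply ContinuousOn.intervalIntegrable
    apply ContinuousOn.mul (hf.continuousOn.mono ?_) hecont.continuousOn
    rw [Set.uIcc_of_le hx]
    exact fun y hy => hy.1
  -- the main finite-interval estimate
  have hmain : ∀ a R : ℝ, L < a → a ≤ R →
      ‖∫ x in a..R, f x * e x‖ ≤
        (∑ j ∈ Finset.range k, (‖(A^[j] f) R‖ / R + ‖(A^[j] f) a‖ / a) / ‖c‖^(j+1))
          + (M / L) / ‖c‖^k := by
    intro a R ha haR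
    have haL : (0:ℝ) < a := lt_trans hL ha
    have hsub : Set.uIcc a R ⊆ Set.Ioi L := by
      rw [Set.uIcc_of_le haR]
      exact fun x hx => lt_of_lt_of_le ha hx.1
    have key := rec_bound ‖c‖ (M / L) hcpos k
      (fun n => ‖∫ x in a..R, (A^[n] f) x * e x‖)
      (fun n => ‖(A^[n] f) R‖ / R + ‖(A^[n] f) a‖ / a) ?_ ?_
    · exact key
    · -- the IBP recursion step
      intro n hn
      set F : ℝ → ℂ := fun x => (A^[n] f) x / (x:ℂ) * e x with hF
      have hFd : ∀ x ∈ Set.uIcc a R,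
          HasDerivAt F ((A^[n+1] f) x * e x + c * ((A^[n] f) x * e x)) x := by
        intro x hx
        have hxI := hsub hx
        have hx0 : (0:ℝ) < x := lt_trans hL hxI
        have h1 := (hgd n hn x hxI).mul (hE x)
        have hxc : (x:ℂ) ≠ 0 := by exact_mod_cast hx0.ne'
        have key : (A^[n] f) x / (x:ℂ) * (c * x * e x) = c * ((A^[n] f) x * e x) := by
          rw [div_mul_eq_mul_div, div_eq_iff hxc]; ring
        rw [← key]
        exact h1
      have hint1 := hInt (n+1) (by omega) a R ha haR
      have hint0 := hInt n (by omega) a R ha haR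
      have hintsum : IntervalIntegrable
          (fun x : ℝ => (A^[n+1] f) x * e x + c * ((A^[n] f) x * e x))
          MeasureTheory.volume a R := hint1.add (hint0.const_mul c)
      have hibp := intervalIntegral.integral_eq_sub_of_hasDerivAt hFd hintsum
      rw [intervalIntegral.integral_add hint1 (hint0.const_mul c),
        intervalIntegral.integral_const_mul] at hibp
      have hceq : c * ∫ x in a..R, (A^[n] f) x * e x =
          (F R - F a) - ∫ x in a..R, (A^[n+1] f) x * e x := by
        rw [← hibp]; ring
      have hnorm : ‖c‖ * ‖∫ x in a..R, (A^[n] f) x * e x‖ ≤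
          ‖F R‖ + ‖F a‖ + ‖∫ x in a..R, (A^[n+1] f) x * e x‖ := by
        rw [← norm_mul, hceq]
        calc ‖(F R - F a) - ∫ x in a..R, (A^[n+1] f) x * e x‖
            ≤ ‖F R - F a‖ + ‖∫ x in a..R, (A^[n+1] f) x * e x‖ := norm_sub_le _ _
          _ ≤ ‖F R‖ + ‖F a‖ + ‖∫ x in a..R, (A^[n+1] f) x * e x‖ := by
              have := norm_sub_le (F R) (F a)
              linarith
      have hFval : ∀ x : ℝ, 0 < x → ‖F x‖ = ‖(A^[n] f) x‖ / x := by
        intro x hx0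
        rw [hF]
        simp only [norm_mul, heone x, mul_one, norm_div]
        congr 1
        simp [abs_of_pos hx0]
      rw [hFval R (lt_of_lt_of_le haL haR), hFval a haL] at hnorm
      rw [le_div_iff₀ hcpos]
      linarith
    · -- the final integral bound
      have hbound : ∀ x ∈ Set.uIoc a R, ‖(A^[k] f) x * e x‖ ≤ M / x^2 := by
        intro x hx
        rw [Set.uIoc_of_le haR] at hx
        rw [norm_mul, heone x, mul_one]
        exact hMle x (lt_trans ha hx.1)
      have hintM : IntervalIntegrable (fun x : ℝ => M / x^2) MeasureTheory.volume a R := by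
        apply ContinuousOn.intervalIntegrable
        apply ContinuousOn.div continuousOn_const (by fun_prop)
        intro x hx
        rw [Set.uIcc_of_le haR] at hx
        have : (0:ℝ) < x := lt_of_lt_of_le haL hx.1
        positivity
      have h1 : ‖∫ x in a..R, (A^[k] f) x * e x‖ ≤ |∫ x in a..R, M / x^2| :=
        intervalIntegral.norm_integral_le_abs_of_norm_le
          (MeasureTheory.ae_restrict_of_forall_mem measurableSet_uIoc hbound) hintM
      have h2 : ∫ x in a..R, M / x^2 = M * (a⁻¹ - R⁻¹) := by
        have h0 : (0:ℝ) ∉ Set.uIcc a R := by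
          rw [Set.uIcc_of_le haR]
          intro h
          exact absurd h.1 (not_le.mpr haL)
        have hz : ∫ x in a..R, x^(-2 : ℤ) =
            (R ^ (-2 + 1 : ℤ) - a ^ (-2 + 1 : ℤ)) / ((-2 : ℤ) + 1) :=
          integral_zpow (Or.inr ⟨by norm_num, h0⟩)
        have : ∫ x in a..R, M / x^2 = M * ∫ x in a..R, x^(-2 : ℤ) := by
          rw [← intervalIntegral.integral_const_mul]
          apply intervalIntegral.integral_congr
          intro x hx
          have hx0 : (0:ℝ) < x := lt_of_lt_of_le haL (by rw [Set.uIcc_of_le haR] at hx; exact hx.1)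
          show M / x ^ 2 = M * x ^ (-2 : ℤ)
          rw [zpow_neg, div_eq_mul_inv]
          norm_cast
        rw [this, hz]
        norm_num
        left
        ring
      have h3 : M * (a⁻¹ - R⁻¹) ≤ M / L := by
        have hR0 : (0:ℝ) < R := lt_of_lt_of_le haL haR
        have : a⁻¹ - R⁻¹ ≤ L⁻¹ := by
          have h4 : a⁻¹ ≤ L⁻¹ := by
            apply inv_anti₀ hL (le_of_lt ha)
          have h5 : (0:ℝ) ≤ R⁻¹ := by positivity
          linarith
        calc M * (a⁻¹ - R⁻¹) ≤ M * L⁻¹ := by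
              apply mul_le_mul_of_nonneg_left this hM0
          _ = M / L := by rw [div_eq_mul_inv]
      have hmono : R⁻¹ ≤ a⁻¹ := by
        apply inv_anti₀ haL haR
      have habs : |∫ x in a..R, M / x^2| = M * (a⁻¹ - R⁻¹) := by
        rw [h2, abs_of_nonneg]
        apply mul_nonneg hM0
        linarith
      rw [habs] at h1
      linarith
  have hA0 : A^[0] f = f := rfl
  -- splitting the integral
  have hsplit : ∀ a : ℝ, L < a → Tendsto (fun R : ℝ => ∫ x in a..R, f x * e x) atTop
      (𝓝 (I - ∫ x in L..a, f x * e x)) := by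
    intro a ha
    have hev : (fun R : ℝ => (∫ x in L..R, f x * e x) - (∫ x in L..a, f x * e x))
        =ᶠ[atTop] (fun R : ℝ => ∫ x in a..R, f x * e x) := by
      filter_upwards [eventually_ge_atTop a] with R hR
      have h1 := intervalIntegral.integral_add_adjacent_intervals
        (hIntL a ha.le) (hA0 ▸ hInt 0 (by omega) a R ha hR)
      rw [← h1]; ring
    exact Tendsto.congr' hev (hI.sub_const _)
  have hRlim : ∀ j, j < k → Tendsto (fun R : ℝ => ‖(A^[j] f) R‖ / R) atTop (𝓝 0) := by
    intro j hj
    have h1 := (hdecay j hj).norm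
    rw [norm_zero] at h1
    apply h1.congr'
    filter_upwards [eventually_gt_atTop 0] with R hR
    rw [norm_div]
    congr 1
    simp [abs_of_pos hR]
  have hbound_a : ∀ a : ℝ, L < a → ‖I - ∫ x in L..a, f x * e x‖ ≤
      (∑ j ∈ Finset.range k, (‖(A^[j] f) a‖ / a) / ‖c‖^(j+1)) + (M / L) / ‖c‖^k := by
    intro a ha
    have hlhs : Tendsto (fun R : ℝ => ‖∫ x in a..R, f x * e x‖) atTop
        (𝓝 ‖I - ∫ x in L..a, f x * e x‖) := (hsplit a ha).norm
    have hrhs : Tendsto (fun R : ℝ =>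
        (∑ j ∈ Finset.range k, (‖(A^[j] f) R‖ / R + ‖(A^[j] f) a‖ / a) / ‖c‖^(j+1))
          + (M / L) / ‖c‖^k) atTop
        (𝓝 ((∑ j ∈ Finset.range k, ((0:ℝ) + ‖(A^[j] f) a‖ / a) / ‖c‖^(j+1))
          + (M / L) / ‖c‖^k)) := by
      apply Tendsto.add _ tendsto_const_nhds
      apply tendsto_finset_sum
      intro j hj
      exact ((hRlim j (Finset.mem_range.mp hj)).add_const _).div_const _
    have hle : (fun R : ℝ => ‖∫ x in a..R, f x * e x‖) ≤ᶠ[atTop] (fun R : ℝ =>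
        (∑ j ∈ Finset.range k, (‖(A^[j] f) R‖ / R + ‖(A^[j] f) a‖ / a) / ‖c‖^(j+1))
          + (M / L) / ‖c‖^k) := by
      filter_upwards [eventually_ge_atTop a] with R hR using hmain a R ha hR
    have := le_of_tendsto_of_tendsto hlhs hrhs hle
    simpa using this
  -- integral over [L, a] tends to 0 as a → L⁺
  have hIntLim : Tendsto (fun a : ℝ => ∫ x in L..a, f x * e x) (𝓝[>] L) (𝓝 0) := by
    have hcont : ContinuousOn (fun l : ℝ => f l * e l) (Set.Icc L (L+1)) :=
      (hf.continuousOn.mono (Set.Icc_subset_Ici_self)).mul hecont.continuousOn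
    obtain ⟨C, hC⟩ := (isCompact_Icc (a := L) (b := L+1)).exists_bound_of_continuousOn hcont
    apply tendsto_zero_iff_norm_tendsto_zero.mpr
    refine squeeze_zero' (g := fun a : ℝ => C * |a - L|)
      (Eventually.of_forall fun a => norm_nonneg _) ?_ ?_
    · filter_upwards [Ioc_mem_nhdsGT_of_mem (show L ∈ Set.Ico L (L+1) from ⟨le_refl L, by linarith⟩)]
        with a ha
      apply intervalIntegral.norm_integral_le_of_norm_le_const
      intro x hx
      rw [Set.uIoc_of_le ha.1.le] at hx
      exact hC x (Set.mem_Icc.mpr ⟨hx.1.le, hx.2.trans ha.2⟩)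
    · have : Tendsto (fun a : ℝ => C * |a - L|) (𝓝 L) (𝓝 (C * |L - L|)) := by
        apply Tendsto.const_mul
        exact ((continuous_id.sub continuous_const).abs.tendsto L)
      rw [show |L - L| = 0 by simp, mul_zero] at this
      exact this.mono_left nhdsWithin_le_nhds
  have hlhs2 : Tendsto (fun a : ℝ => ‖I - ∫ x in L..a, f x * e x‖) (𝓝[>] L) (𝓝 ‖I‖) := by
    have h1 := (tendsto_const_nhds (x := I) (f := 𝓝[>] L)).sub hIntLim
    rw [sub_zero] at h1
    exact h1.norm
  have hrhs2 : Tendsto (fun a : ℝ =>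
      (∑ j ∈ Finset.range k, (‖(A^[j] f) a‖ / a) / ‖c‖^(j+1)) + (M / L) / ‖c‖^k) (𝓝[>] L)
      (𝓝 ((0:ℝ) + (M / L) / ‖c‖^k)) := by
    apply Tendsto.add _ tendsto_const_nhds
    have h0 : (0:ℝ) = ∑ _j ∈ Finset.range k, (0:ℝ) := by simp
    rw [h0]
    apply tendsto_finset_sum
    intro j hj
    have hnum : Tendsto (fun a : ℝ => ‖(A^[j] f) a‖) (𝓝[>] L) (𝓝 0) := by
      have := (hlimL j (Finset.mem_range.mp hj)).norm
      rwa [norm_zero] at this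
    have hden : Tendsto (fun a : ℝ => a) (𝓝[>] L) (𝓝 L) :=
      (continuous_id.tendsto L).mono_left nhdsWithin_le_nhds
    have := (hnum.div hden hL.ne').div_const (‖c‖^(j+1))
    simpa using this
  have hfin := le_of_tendsto_of_tendsto hlhs2 hrhs2
    (eventually_of_mem self_mem_nhdsWithin fun a ha => hbound_a a ha)
  rw [zero_add, hcnorm] at hfin
  calc ‖I‖ ≤ (M / L) / (4 * |t|)^k := hfin
    _ = (1 / (L * 4^k * |t|^k)) * M := by
        rw [mul_pow]
        field_simp
        try ring
        try exact Or.inl trivial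
end

section
/- Let q : ℝ² → ℂ^N be a smooth bounded solution of the vector nonlinear Schrödinger equation i∂_t q + (1/2)∂_x² q + (qᵀq*) q = 0, and set V₀(x,t) := −qᵀ(x,t) q*(x,t) = −∑ₙ |qₙ(x,t)|². Suppose v(x,t) ∈ ℂ^{N+1} satisfies the compatible linear system X(λ,q)v = 0 and T(λ,q)v = 0 (the Lax pair of the paper) for some λ ∈ ℂ. Then the first component f(x,t) := v₁(x,t) satisfies the linear Schrödinger equation i∂_t f + (1/2)∂_x² f − V₀(x,t) f = 0. -/
/-- Squared-eigenfunction solution of the linear Schrödinger equation.  Let `q` be a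
smooth bounded solution of the vector NLS equation
`i∂_t q + (1/2)∂_x² q + (qᵀq*)q = 0` and `V₀ = −qᵀq*`.  If `v = (f, w)` satisfies the
Lax pair `X(λ,q)v = 0`, `T(λ,q)v = 0` (written componentwise below with the
designated partial derivatives), then the first component `f` satisfies
`i∂_t f + (1/2)∂_x² f − V₀ f = 0`. -/
theorem lax_pair_first_component_solves_schrodinger (N : ℕ) (lam : ℂ)
    (q qx qxx qt : ℝ → ℝ → Fin N → ℂ)
    (hqx : ∀ x t n, HasDerivAt (fun x' : ℝ => q x' t n) (qx x t n) x)
    (hqxx : ∀ x t n, HasDerivAt (fun x' : ℝ => qx x' t n) (qxx x t n) x)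
    (hqt : ∀ x t n, HasDerivAt (fun t' : ℝ => q x t' n) (qt x t n) t)
    (hNLS : ∀ x t n, Complex.I * qt x t n + (1/2) * qxx x t n
        + (∑ m, q x t m * (starRingEnd ℂ) (q x t m)) * q x t n = 0)
    (f fx fxx ft : ℝ → ℝ → ℂ)
    (w wx wt : ℝ → ℝ → Fin N → ℂ)
    (hfx : ∀ x t, HasDerivAt (fun x' : ℝ => f x' t) (fx x t) x)
    (hfxx : ∀ x t, HasDerivAt (fun x' : ℝ => fx x' t) (fxx x t) x)
    (hft : ∀ x t, HasDerivAt (fun t' : ℝ => f x t') (ft x t) t)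
    (hwx : ∀ x t n, HasDerivAt (fun x' : ℝ => w x' t n) (wx x t n) x)
    (hwt : ∀ x t n, HasDerivAt (fun t' : ℝ => w x t' n) (wt x t n) t)
    -- the equation X(λ,q)v = 0:
    (hX1 : ∀ x t, fx x t = -2 * Complex.I * lam * f x t + ∑ n, q x t n * w x t n)
    (hX2 : ∀ x t n, wx x t n = -(starRingEnd ℂ) (q x t n) * f x t)
    -- the equation T(λ,q)v = 0:
    (hT1 : ∀ x t, ft x t = -2 * Complex.I * lam^2 * f x t
        + lam * ∑ n, q x t n * w x t n
        + (Complex.I/2) * (∑ n, q x t n * (starRingEnd ℂ) (q x t n)) * f x t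
        + (Complex.I/2) * ∑ n, qx x t n * w x t n)
    (hT2 : ∀ x t n, wt x t n = -lam * (starRingEnd ℂ) (q x t n) * f x t
        + (Complex.I/2) * ((starRingEnd ℂ) (qx x t n) * f x t
            - (starRingEnd ℂ) (q x t n) * ∑ m, q x t m * w x t m)) :
    ∀ x t, Complex.I * ft x t + (1/2) * fxx x t
        - (-(∑ n, q x t n * (starRingEnd ℂ) (q x t n))) * f x t = 0 := by
  intro x t
  -- derivative of hX1 in x gives fxx
  have hD : fxx x t = -2*Complex.I*lam * fx x t
      + ∑ n, (qx x t n * w x t n + q x t n * wx x t n) := by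
    have he : (fun x' : ℝ => fx x' t)
        = fun x' : ℝ => -2 * Complex.I * lam * f x' t + ∑ n, q x' t n * w x' t n :=
      funext fun x' => hX1 x' t
    have h1 : HasDerivAt (fun x' : ℝ => fx x' t)
        (-2*Complex.I*lam * fx x t + ∑ n, (qx x t n * w x t n + q x t n * wx x t n)) x := by
      rw [he]
      exact ((hfx x t).const_mul _).add
        (HasDerivAt.fun_sum fun n _ => (hqx x t n).mul (hwx x t n))
    exact (hfxx x t).unique h1
  have hs : ∑ n, q x t n * wx x t n
      = (-(∑ n, q x t n * (starRingEnd ℂ) (q x t n))) * f x t := by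
    calc ∑ n, q x t n * wx x t n
        = ∑ n, (q x t n * (starRingEnd ℂ) (q x t n)) * (-(f x t)) :=
          Finset.sum_congr rfl fun n _ => by rw [hX2]; ring
      _ = (-(∑ n, q x t n * (starRingEnd ℂ) (q x t n))) * f x t := by
          rw [← Finset.sum_mul]; ring
  rw [hD, hT1, hX1, Finset.sum_add_distrib, hs]
  ring_nf
  rw [Complex.I_sq]
  ring
end
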